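/- For n ≥ 2, the set of prefixes of length f_{2n} − 1 of words in A_n is a proper subset of the set of prefixes of length f_{2n} − 1 of words in the concatenation set B_nA_n; that is, A_n[1, f_{2n}−1] ⊊ (B_nA_n)[1, f_{2n}−1]. -/

import Mathlib

/-- The two-letter alphabet. -/
inductive Letter : Type
  | a : Letter
  | b : Letter
deriving DecidableEq

/-- A word is a finite sequence of letters. -/
abbrev Word := List Letter

/-- Concatenation set `UV = {uv : u ∈ U, v ∈ V}`. -/
def concatSet (U V : Set Word) : Set Word := {w | ∃ u ∈ U, ∃ v ∈ V, w = u ++ v}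

mutual
  /-- The sets `A_n` of inflated words (indexed so that `Aset 1 = {a}`). -/
  def Aset : ℕ → Set Word
    | 0 => ∅
    | 1 => {[Letter.a]}
    | n + 2 => concatSet (Bset (n + 1)) (concatSet (Aset (n + 1)) (Aset (n + 1)))
  /-- The sets `B_n` of inflated words (indexed so that `Bset 1 = {b}`). -/
  def Bset : ℕ → Set Word
    | 0 => ∅
    | 1 => {[Letter.b]}
    | n + 2 => concatSet (Aset (n + 1)) (Bset (n + 1)) ∪ concatSet (Bset (n + 1)) (Aset (n + 1))
end

/-- The sub-word `w[a,b] = w_a w_{a+1} … w_b` (1-indexed). -/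
def wordSlice (w : Word) (i j : ℕ) : Word := (w.drop (i - 1)).take (j - i + 1)

/-- `W[a,b] = {w[a,b] : w ∈ W}`. -/
def setSlice (W : Set Word) (i j : ℕ) : Set Word := {x | ∃ w ∈ W, x = wordSlice w i j}

/-- `x` is a sub-word (contiguous factor) of `w`. -/
def IsFactor (x w : Word) : Prop := ∃ u v : Word, w = u ++ x ++ v

/-- `F(S, m)`: the set of all sub-words of length `m` of words in `S`. -/
def FactorSet (S : Set Word) (m : ℕ) : Set Word :=
  {x | x.length = m ∧ ∃ w ∈ S, IsFactor x w}

/-- `F(A, m) = ⋃_{n ≥ 1} F(A_n, m)`. -/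
def FA (m : ℕ) : Set Word := ⋃ n ∈ {n : ℕ | 1 ≤ n}, FactorSet (Aset n) m

/-- `F(B, m) = ⋃_{n ≥ 1} F(B_n, m)`. -/
def FB (m : ℕ) : Set Word := ⋃ n ∈ {n : ℕ | 1 ≤ n}, FactorSet (Bset n) m

/-- The golden mean `τ = (1 + √5)/2`. -/
noncomputable def tau : ℝ := (1 + Real.sqrt 5) / 2

/-! ### Auxiliary lemmas -/

open Letter List

lemma aux_take_append (l₁ l₂ : Word) (m : ℕ) (h : l₁.length ≤ m) :
    (l₁ ++ l₂).take m = l₁ ++ l₂.take (m - l₁.length) := by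
  rw [List.take_append, List.take_of_length_le h]

lemma aux_lenAB (n : ℕ) :
    (∀ w ∈ Aset n, w.length = Nat.fib (2*n)) ∧ (∀ w ∈ Bset n, w.length = Nat.fib (2*n-1)) := by
  induction n using Nat.strong_induction_on with
  | _ n ih =>
    match n with
    | 0 => constructor <;> rintro w hw <;> exact absurd hw (Set.notMem_empty w)
    | 1 =>
      constructor <;> intro w hw <;>
        · have hw' : w = _ := hw
          rw [hw']
          decide
    | n+2 =>
      obtain ⟨ihA, ihB⟩ := ih (n+1) (by omega)
      have f1 : Nat.fib (2*n+4) = Nat.fib (2*n+2) + Nat.fib (2*n+3) := Nat.fib_add_two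
      have f2 : Nat.fib (2*n+3) = Nat.fib (2*n+1) + Nat.fib (2*n+2) := Nat.fib_add_two
      constructor
      · rintro w ⟨u, hu, v, ⟨x, hx, y, hy, rfl⟩, rfl⟩
        have lu := ihB u hu; have lx := ihA x hx; have ly := ihA y hy
        rw [show 2*(n+1) = 2*n+2 by ring] at lx ly
        rw [show 2*(n+1)-1 = 2*n+1 by omega] at lu
        rw [show 2*(n+2) = 2*n+4 by ring]
        simp only [List.length_append, lu, lx, ly]
        omega
      · rintro w (⟨u, hu, v, hv, rfl⟩ | ⟨u, hu, v, hv, rfl⟩) <;>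
        · first
          | (have lu := ihA u hu; have lv := ihB v hv
             rw [show 2*(n+1) = 2*n+2 by ring] at lu
             rw [show 2*(n+1)-1 = 2*n+1 by omega] at lv)
          | (have lu := ihB u hu; have lv := ihA v hv
             rw [show 2*(n+1) = 2*n+2 by ring] at lv
             rw [show 2*(n+1)-1 = 2*n+1 by omega] at lu)
          rw [show 2*(n+2)-1 = 2*n+3 by omega]
          simp only [List.length_append, lu, lv]
          omega

lemma aux_lenA {n : ℕ} {w : Word} (hw : w ∈ Aset n) : w.length = Nat.fib (2*n) :=
  (aux_lenAB n).1 w hw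

lemma aux_lenB {n : ℕ} {w : Word} (hw : w ∈ Bset n) : w.length = Nat.fib (2*n-1) :=
  (aux_lenAB n).2 w hw

lemma aux_nonempty : ∀ n, 1 ≤ n → (Aset n).Nonempty ∧ (Bset n).Nonempty := by
  intro n hn
  induction n, hn using Nat.le_induction with
  | base => exact ⟨⟨[Letter.a], rfl⟩, ⟨[Letter.b], rfl⟩⟩
  | succ n hn ih =>
    obtain ⟨⟨x, hx⟩, ⟨u, hu⟩⟩ := ih
    obtain ⟨m, rfl⟩ : ∃ m, n = m + 1 := ⟨n - 1, by omega⟩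
    exact ⟨⟨u ++ (x ++ x), ⟨u, hu, x ++ x, ⟨x, hx, x, hx, rfl⟩, rfl⟩⟩,
      ⟨u ++ x, Or.inr ⟨u, hu, x, hx, rfl⟩⟩⟩

/-- every word of `A_n`, `n ≥ 2`, ends with `aa`. -/
lemma aux_endsAA : ∀ n, 2 ≤ n → ∀ w ∈ Aset n, [Letter.a, Letter.a] <:+ w := by
  intro n hn
  induction n, hn using Nat.le_induction with
  | base =>
    rintro w ⟨u, hu, v, ⟨x, hx, y, hy, rfl⟩, rfl⟩
    have hu' : u = [Letter.b] := hu
    have hx' : x = [Letter.a] := hx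
    have hy' : y = [Letter.a] := hy
    subst hu' hx' hy'
    exact ⟨[Letter.b], rfl⟩
  | succ n hn ih =>
    obtain ⟨m, rfl⟩ : ∃ m, n = m + 1 := ⟨n - 1, by omega⟩
    rintro w ⟨u, hu, v, ⟨x, hx, y, hy, rfl⟩, rfl⟩
    exact ((ih y hy).trans (List.suffix_append x y)).trans (List.suffix_append u (x ++ y))

/-- prefix lifting: every `A_n` word agrees with some `A_{n+1}` word on the
first `f_{2n} - 1` letters. -/
lemma aux_lift : ∀ n, 1 ≤ n → ∀ y ∈ Aset n,
    ∃ z ∈ Aset (n+1), z.take (Nat.fib (2*n) - 1) = y.take (Nat.fib (2*n) - 1) := by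
  intro n hn
  induction n, hn using Nat.le_induction with
  | base =>
    intro y hy
    refine ⟨[Letter.b] ++ ([Letter.a] ++ [Letter.a]),
      ⟨[Letter.b], rfl, [Letter.a] ++ [Letter.a], ⟨[Letter.a], rfl, [Letter.a], rfl, rfl⟩, rfl⟩, ?_⟩
    rw [show Nat.fib (2*1) - 1 = 0 by decide]
    simp
  | succ n hn ih =>
    obtain ⟨m, rfl⟩ : ∃ m, n = m + 1 := ⟨n - 1, by omega⟩
    rintro y ⟨u, hu, v, ⟨x, hx, r, hr, rfl⟩, rfl⟩
    obtain ⟨r', hr', hrtake⟩ := ih r hr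
    obtain ⟨s, hs⟩ := (aux_nonempty (m+2) (by omega)).1
    refine ⟨(u ++ x) ++ (r' ++ s),
      ⟨u ++ x, Or.inr ⟨u, hu, x, hx, rfl⟩, r' ++ s, ⟨r', hr', s, hs, rfl⟩, rfl⟩, ?_⟩
    have lu := aux_lenB hu
    have lx := aux_lenA hx
    have lr := aux_lenA hr
    have lr' := aux_lenA hr'
    rw [show 2*(m+1)-1 = 2*m+1 by omega] at lu
    rw [show 2*(m+1) = 2*m+2 by ring] at lx lr hrtake
    rw [show 2*(m+1+1) = 2*m+4 by ring] at lr' ⊢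
    have f1 : Nat.fib (2*m+4) = Nat.fib (2*m+2) + Nat.fib (2*m+3) := Nat.fib_add_two
    have f2 : Nat.fib (2*m+3) = Nat.fib (2*m+1) + Nat.fib (2*m+2) := Nat.fib_add_two
    have fpos : 0 < Nat.fib (2*m+2) := Nat.fib_pos.mpr (by omega)
    set M := Nat.fib (2*m+4) - 1 with hM
    have hulen : (u ++ x).length = Nat.fib (2*m+3) := by
      simp only [List.length_append, lu, lx]; omega
    rw [show u ++ (x ++ r) = (u ++ x) ++ r by simp]
    rw [aux_take_append (u ++ x) (r' ++ s) M (by omega),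
        aux_take_append (u ++ x) r M (by omega)]
    rw [show M - (u ++ x).length = Nat.fib (2*m+2) - 1 by omega]
    rw [List.take_append_of_le_length (by omega : Nat.fib (2*m+2) - 1 ≤ r'.length)]
    rw [hrtake]

/-- there is a word of `A_n`, `n ≥ 3`, with the letter `b` in position `f_{2n-2} - 1`. -/
lemma aux_witness : ∀ n, 3 ≤ n → ∃ v ∈ Aset n, ∃ p s : Word,
    v = p ++ Letter.b :: s ∧ p.length = Nat.fib (2*n-2) - 2 := by
  intro n hn
  induction n, hn using Nat.le_induction with
  | base =>
    have hA2 : [Letter.b, Letter.a, Letter.a] ∈ Aset 2 :=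
      ⟨[Letter.b], rfl, [Letter.a] ++ [Letter.a], ⟨[Letter.a], rfl, [Letter.a], rfl, rfl⟩, rfl⟩
    refine ⟨[Letter.a, Letter.b] ++
        ([Letter.b, Letter.a, Letter.a] ++ [Letter.b, Letter.a, Letter.a]),
      ⟨[Letter.a, Letter.b], Or.inl ⟨[Letter.a], rfl, [Letter.b], rfl, rfl⟩,
        _, ⟨[Letter.b, Letter.a, Letter.a], hA2, [Letter.b, Letter.a, Letter.a], hA2, rfl⟩, rfl⟩,
      [Letter.a], [Letter.b, Letter.a, Letter.a, Letter.b, Letter.a, Letter.a], rfl, by decide⟩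
  | succ n hn ih =>
    obtain ⟨q, hq, p, s, hqeq, hplen⟩ := ih
    obtain ⟨m, rfl⟩ : ∃ m, n = m + 2 := ⟨n - 2, by omega⟩
    obtain ⟨⟨r, hr⟩, ⟨u, hu⟩⟩ := aux_nonempty (m+2) (by omega)
    refine ⟨u ++ (q ++ r), ⟨u, hu, q ++ r, ⟨q, hq, r, hr, rfl⟩, rfl⟩,
      u ++ p, s ++ r, by rw [hqeq]; simp, ?_⟩
    have lu := aux_lenB hu
    rw [show 2*(m+2)-1 = 2*m+3 by omega] at lu
    rw [show 2*(m+2)-2 = 2*m+2 by omega] at hplen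
    rw [show 2*(m+2+1)-2 = 2*m+4 by omega]
    have f1 : Nat.fib (2*m+4) = Nat.fib (2*m+2) + Nat.fib (2*m+3) := Nat.fib_add_two
    have hf2 : 2 ≤ Nat.fib (2*m+2) := by
      calc (2:ℕ) ≤ Nat.fib 3 := by decide
      _ ≤ Nat.fib (2*m+2) := Nat.fib_mono (by omega)
    simp only [List.length_append, lu, hplen]
    omega

theorem prefix_Aset_ssubset_BA (n : ℕ) (hn : 2 ≤ n) :
    setSlice (Aset n) 1 (Nat.fib (2 * n) - 1) ⊂
      setSlice (concatSet (Bset n) (Aset n)) 1 (Nat.fib (2 * n) - 1) := by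
  have hfib4 : (3:ℕ) ≤ Nat.fib (2*n) := by
    calc (3:ℕ) = Nat.fib 4 := by decide
    _ ≤ Nat.fib (2*n) := Nat.fib_mono (by omega)
  set M := Nat.fib (2*n) - 1 with hM
  have hslice : ∀ w : Word, wordSlice w 1 M = w.take M := by
    intro w
    simp only [wordSlice, Nat.sub_self, List.drop_zero]
    congr 1
    omega
  have hlast : ∀ x ∈ setSlice (Aset n) 1 M, x.getLast? = some Letter.a := by
    rintro x ⟨w, hw, rfl⟩
    obtain ⟨w'', hw''⟩ := aux_endsAA n hn w hw
    have lw := aux_lenA hw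
    have lw'' : w''.length = Nat.fib (2*n) - 2 := by
      rw [← hw''] at lw; simp only [List.length_append, List.length_cons,
        List.length_nil] at lw; omega
    rw [hslice, ← hw'', aux_take_append w'' _ M (by omega)]
    rw [show M - w''.length = 1 by omega]
    rw [show List.take 1 [Letter.a, Letter.a] = [Letter.a] from rfl]
    exact List.getLast?_concat
  rw [Set.ssubset_def]
  constructor
  · rintro x ⟨w, hw, rfl⟩
    obtain ⟨m, rfl⟩ : ∃ m, n = m + 2 := ⟨n - 2, by omega⟩
    obtain ⟨u, hu, v, ⟨x1, hx1, y, hy, rfl⟩, rfl⟩ := hw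
    obtain ⟨y', hy', hytake⟩ := aux_lift (m+1) (by omega) y hy
    refine ⟨(u ++ x1) ++ y', ⟨u ++ x1, Or.inr ⟨u, hu, x1, hx1, rfl⟩, y', hy', rfl⟩, ?_⟩
    rw [hslice, hslice]
    have lu := aux_lenB hu
    have lx1 := aux_lenA hx1
    have ly := aux_lenA hy
    have ly' := aux_lenA hy'
    rw [show 2*(m+1)-1 = 2*m+1 by omega] at lu
    rw [show 2*(m+1) = 2*m+2 by ring] at lx1 ly hytake
    rw [show 2*(m+1+1) = 2*m+4 by ring] at ly'
    rw [show 2*(m+2) = 2*m+4 by ring] at hM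
    have f1 : Nat.fib (2*m+4) = Nat.fib (2*m+2) + Nat.fib (2*m+3) := Nat.fib_add_two
    have f2 : Nat.fib (2*m+3) = Nat.fib (2*m+1) + Nat.fib (2*m+2) := Nat.fib_add_two
    have fpos : 0 < Nat.fib (2*m+2) := Nat.fib_pos.mpr (by omega)
    have hulen : (u ++ x1).length = Nat.fib (2*m+3) := by
      simp only [List.length_append, lu, lx1]; omega
    rw [show u ++ (x1 ++ y) = (u ++ x1) ++ y by simp]
    rw [aux_take_append (u ++ x1) y M (by omega),
        aux_take_append (u ++ x1) y' M (by omega)]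
    rw [show M - (u ++ x1).length = Nat.fib (2*m+2) - 1 by omega]
    rw [hytake]
  · intro hcon
    have key : ∃ z₀ ∈ concatSet (Bset n) (Aset n),
        (z₀.take M).getLast? = some Letter.b := by
      by_cases hn3 : 3 ≤ n
      · obtain ⟨v, hv, p, s, rfl, hplen⟩ := aux_witness n hn3
        obtain ⟨u₀, hu₀⟩ := (aux_nonempty n (by omega)).2
        refine ⟨u₀ ++ (p ++ Letter.b :: s), ⟨u₀, hu₀, _, hv, rfl⟩, ?_⟩
        have lu₀ := aux_lenB hu₀
        have f1 : Nat.fib (2*n) = Nat.fib (2*n-2) + Nat.fib (2*n-1) := by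
          obtain ⟨k, rfl⟩ : ∃ k, n = k + 2 := ⟨n - 2, by omega⟩
          have h1 : Nat.fib (2*k+4) = Nat.fib (2*k+2) + Nat.fib (2*k+3) := Nat.fib_add_two
          rw [show 2*(k+2)-2 = 2*k+2 by omega, show 2*(k+2)-1 = 2*k+3 by omega,
            show 2*(k+2) = 2*k+4 by ring, h1]
        have hf3 : 3 ≤ Nat.fib (2*n-2) := by
          calc (3:ℕ) = Nat.fib 4 := by decide
          _ ≤ Nat.fib (2*n-2) := Nat.fib_mono (by omega)
        rw [aux_take_append u₀ _ M (by omega)]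
        rw [show M - u₀.length = Nat.fib (2*n-2) - 1 by omega]
        rw [show (Letter.b :: s : Word) = [Letter.b] ++ s from rfl]
        rw [show p ++ ([Letter.b] ++ s) = (p ++ [Letter.b]) ++ s by simp]
        have hpb : (p ++ [Letter.b]).length = Nat.fib (2*n-2) - 1 := by
          simp only [List.length_append, hplen, List.length_cons, List.length_nil]
          omega
        rw [List.take_append_of_le_length (by omega : Nat.fib (2*n-2) - 1 ≤ (p ++ [Letter.b]).length)]
        rw [List.take_of_length_le (by omega)]
        rw [show u₀ ++ (p ++ [Letter.b]) = (u₀ ++ p) ++ [Letter.b] by simp]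
        exact List.getLast?_concat
      · obtain rfl : n = 2 := by omega
        have hA2 : [Letter.b, Letter.a, Letter.a] ∈ Aset 2 :=
          ⟨[Letter.b], rfl, [Letter.a] ++ [Letter.a], ⟨[Letter.a], rfl, [Letter.a], rfl, rfl⟩, rfl⟩
        refine ⟨[Letter.a, Letter.b] ++ [Letter.b, Letter.a, Letter.a],
          ⟨[Letter.a, Letter.b], Or.inl ⟨[Letter.a], rfl, [Letter.b], rfl, rfl⟩, _, hA2, rfl⟩, ?_⟩
        rw [show M = 2 by rw [hM]; decide]
        decide
    obtain ⟨z₀, hz₀, hz₀last⟩ := key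
    have hx₀ : wordSlice z₀ 1 M ∈ setSlice (Aset n) 1 M := hcon ⟨z₀, hz₀, rfl⟩
    have hx := hlast _ hx₀
    rw [hslice] at hx
    rw [hx] at hz₀last
    exact Letter.noConfusion (Option.some.inj hz₀last)
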